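/- arXiv:2003.11238 — 2 statements merged into one kernel-verified Lean document; each statement's English description precedes it below -/
import Mathlib

section
/- Let T be a linear subspace of R^n, h : R^n → R convex, g_1, g_2 ∈ R^n, t > 0, x ∈ R^n. Define v = argmin_{v ∈ T} ⟨g_1, v⟩ + ‖v‖²/(2t) + h(x + v) and w = argmin_{w ∈ T} ⟨g_2, w⟩ + ‖w‖²/(2t) + h(x + w). Then ‖v − w‖ ≤ t ‖g_1 − g_2‖ (non-expansiveness of the manifold proximal mapping). -/
open MeasureTheory

/-- Non-expansiveness of the manifold proximal mapping: if `T` is a linear subspace of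
`ℝⁿ`, `h` is convex, `t > 0`, and `v`, `w` are the minimizers over `T` of
`⟨g₁, v⟩ + ‖v‖²/(2t) + h(x + v)` and `⟨g₂, w⟩ + ‖w‖²/(2t) + h(x + w)` respectively,
then `‖v − w‖ ≤ t‖g₁ − g₂‖`. -/
theorem statement11 (n : ℕ) (T : Submodule ℝ (EuclideanSpace ℝ (Fin n)))
    (h : EuclideanSpace ℝ (Fin n) → ℝ) (hconv : ConvexOn ℝ Set.univ h)
    (t : ℝ) (ht : 0 < t) (x g₁ g₂ v w : EuclideanSpace ℝ (Fin n))
    (hvT : v ∈ T)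
    (hv : ∀ z ∈ T, (inner ℝ g₁ v : ℝ) + ‖v‖ ^ 2 / (2 * t) + h (x + v)
      ≤ (inner ℝ g₁ z : ℝ) + ‖z‖ ^ 2 / (2 * t) + h (x + z))
    (hwT : w ∈ T)
    (hw : ∀ z ∈ T, (inner ℝ g₂ w : ℝ) + ‖w‖ ^ 2 / (2 * t) + h (x + w)
      ≤ (inner ℝ g₂ z : ℝ) + ‖z‖ ^ 2 / (2 * t) + h (x + z)) :
    ‖v - w‖ ≤ t * ‖g₁ - g₂‖ := by
  by_cases hvw : v = w
  · subst hvw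
    simp
    positivity
  set u : EuclideanSpace ℝ (Fin n) := w - v with hu
  have hune : u ≠ 0 := sub_ne_zero.mpr (Ne.symm hvw)
  have hnu : 0 < ‖u‖ := norm_pos_iff.mpr hune
  set nu : ℝ := ‖u‖ ^ 2 with hnudef
  set b₁ : ℝ := inner ℝ g₁ u with hb₁
  set b₂ : ℝ := inner ℝ g₂ u with hb₂
  set p : ℝ := inner ℝ v u with hp
  set q : ℝ := inner ℝ w u with hq
  have hpq : q - p = nu := by
    have : (inner ℝ (w - v) u : ℝ) = inner ℝ w u - inner ℝ v u := inner_sub_left w v u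
    rw [hnudef, ← real_inner_self_eq_norm_sq]
    rw [hq, hp, ← this, hu]
  have huT : u ∈ T := T.sub_mem hwT hvT
  -- Key inequality for every s ∈ (0,1]
  have key : ∀ s : ℝ, 0 < s → s ≤ 1 → (1 - s) * (nu / t) ≤ b₁ - b₂ := by
    intro s hs hs1
    set z₁ : EuclideanSpace ℝ (Fin n) := v + s • u with hz₁
    set z₂ : EuclideanSpace ℝ (Fin n) := w - s • u with hz₂
    have hz₁T : z₁ ∈ T := T.add_mem hvT (T.smul_mem _ huT)
    have hz₂T : z₂ ∈ T := T.sub_mem hwT (T.smul_mem _ huT)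
    -- inner ℝ product expansions
    have e1 : (inner ℝ g₁ z₁ : ℝ) = inner ℝ g₁ v + s * b₁ := by
      rw [hz₁, inner_add_right, real_inner_smul_right, hb₁]
    have e2 : ‖z₁‖ ^ 2 = ‖v‖ ^ 2 + s * (2 * p + s * nu) := by
      rw [hz₁, norm_add_sq_real, real_inner_smul_right, norm_smul, mul_pow]
      simp only [Real.norm_eq_abs, sq_abs]
      rw [← hp, ← hnudef]
      ring
    have e1' : (inner ℝ g₂ z₂ : ℝ) = inner ℝ g₂ w - s * b₂ := by
      rw [hz₂, inner_sub_right, real_inner_smul_right, hb₂]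
    have e2' : ‖z₂‖ ^ 2 = ‖w‖ ^ 2 - s * (2 * q - s * nu) := by
      rw [hz₂, norm_sub_sq_real, real_inner_smul_right, norm_smul, mul_pow]
      simp only [Real.norm_eq_abs, sq_abs]
      rw [← hq, ← hnudef]
      ring
    -- convexity of h
    have e3 : h (x + z₁) ≤ (1 - s) * h (x + v) + s * h (x + w) := by
      have heq : (1 - s) • (x + v) + s • (x + w) = x + z₁ := by
        rw [hz₁, hu]; module
      have := hconv.2 (Set.mem_univ (x + v)) (Set.mem_univ (x + w))
        (by linarith : (0:ℝ) ≤ 1 - s) hs.le (by ring)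
      rwa [heq] at this
    have e3' : h (x + z₂) ≤ (1 - s) * h (x + w) + s * h (x + v) := by
      have heq : (1 - s) • (x + w) + s • (x + v) = x + z₂ := by
        rw [hz₂, hu]; module
      have := hconv.2 (Set.mem_univ (x + w)) (Set.mem_univ (x + v))
        (by linarith : (0:ℝ) ≤ 1 - s) hs.le (by ring)
      rwa [heq] at this
    have ht' : (2 : ℝ) * t ≠ 0 := by positivity
    have H1 := hv z₁ hz₁T
    rw [e1, e2] at H1
    have H2 := hw z₂ hz₂T
    rw [e1', e2'] at H2
    have hsplit1 : (‖v‖ ^ 2 + s * (2 * p + s * nu)) / (2 * t)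
        = ‖v‖ ^ 2 / (2 * t) + s * ((2 * p + s * nu) / (2 * t)) := by
      field_simp
    have hsplit2 : (‖w‖ ^ 2 - s * (2 * q - s * nu)) / (2 * t)
        = ‖w‖ ^ 2 / (2 * t) - s * ((2 * q - s * nu) / (2 * t)) := by
      field_simp
    have HA' : s * (h (x + v) - h (x + w)) ≤ s * (b₁ + (2 * p + s * nu) / (2 * t)) := by
      rw [hsplit1] at H1
      ring_nf at H1 e3 ⊢
      linarith [H1, e3]
    have HB' : s * (h (x + w) - h (x + v)) ≤ s * (-b₂ - (2 * q - s * nu) / (2 * t)) := by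
      rw [hsplit2] at H2
      ring_nf at H2 e3' ⊢
      linarith [H2, e3']
    have HA : h (x + v) - h (x + w) ≤ b₁ + (2 * p + s * nu) / (2 * t) :=
      le_of_mul_le_mul_left (by linarith [HA']) hs
    have HB : h (x + w) - h (x + v) ≤ -b₂ - (2 * q - s * nu) / (2 * t) :=
      le_of_mul_le_mul_left (by linarith [HB']) hs
    have hdiv : (2 * p + s * nu) / (2 * t) - (2 * q - s * nu) / (2 * t)
        = (s - 1) * (nu / t) := by
      have h2q : q = p + nu := by linarith
      rw [h2q, div_sub_div_same]
      have ht' : t ≠ 0 := ne_of_gt ht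
      field_simp
      ring
    linarith [HA, HB, hdiv]
  -- Take s → 0: conclude nu / t ≤ b₁ - b₂
  have hc : 0 < nu / t := by positivity
  have main : nu / t ≤ b₁ - b₂ := by
    by_contra hlt
    push_neg at hlt
    set c : ℝ := nu / t with hcd
    set I : ℝ := b₁ - b₂ with hI
    set s : ℝ := min 1 ((c - I) / (2 * c)) with hsd
    have hs0 : 0 < s := by
      apply lt_min one_pos
      apply div_pos (by linarith) (by linarith)
    have hs1 : s ≤ 1 := min_le_left _ _
    have hkey := key s hs0 hs1
    have hs2 : s ≤ (c - I) / (2 * c) := min_le_right _ _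
    have h1 : (1 - (c - I) / (2 * c)) * c ≤ (1 - s) * c :=
      mul_le_mul_of_nonneg_right (by linarith) hc.le
    have h2 : (1 - (c - I) / (2 * c)) * c = (c + I) / 2 := by
      field_simp
      ring
    linarith
  -- Cauchy–Schwarz and conclusion
  have hcs : b₁ - b₂ ≤ ‖g₁ - g₂‖ * ‖u‖ := by
    have : (inner ℝ (g₁ - g₂) u : ℝ) = b₁ - b₂ := by
      rw [inner_sub_left, hb₁, hb₂]
    rw [← this]
    exact real_inner_le_norm _ _
  have hnorm : ‖v - w‖ = ‖u‖ := by rw [hu, norm_sub_rev]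
  rw [hnorm]
  have h3 : nu / t ≤ ‖g₁ - g₂‖ * ‖u‖ := le_trans main hcs
  rw [hnudef] at h3
  have h4 : ‖u‖ ^ 2 ≤ t * (‖g₁ - g₂‖ * ‖u‖) := by
    rw [div_le_iff₀ ht] at h3
    linarith
  nlinarith [h4, hnu]
end

section
/- Let α ≥ L_H > 0, η ∈ R^d, g ∈ R^d, and H a symmetric d×d matrix. Suppose the cubic-subproblem optimality conditions hold: (H + λ* I)η + g = 0, λ* = (α/2)‖η‖, and H + λ* I ⪰ 0. Then g^T η + (1/2) η^T H η + (L_H/6)‖η‖³ ≤ −(α/12)‖η‖³. -/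
/-- Sufficient decrease for the cubic regularized Newton step: if `α ≥ L_H > 0` and the
cubic subproblem optimality conditions `(H + λ* I)η + g = 0`, `λ* = (α/2)‖η‖`,
`H + λ* I ⪰ 0` hold (with `H` symmetric), then
`gᵀη + (1/2)ηᵀHη + (L_H/6)‖η‖³ ≤ −(α/12)‖η‖³`. -/
theorem statement16 (d : ℕ) (α LH : ℝ) (hLH : 0 < LH) (hα : LH ≤ α)
    (η g : EuclideanSpace ℝ (Fin d))
    (H : EuclideanSpace ℝ (Fin d) →L[ℝ] EuclideanSpace ℝ (Fin d))
    (hsym : ∀ a b : EuclideanSpace ℝ (Fin d), (inner ℝ (H a) b : ℝ) = inner ℝ a (H b))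
    (lam : ℝ) (hlam : lam = α / 2 * ‖η‖)
    (hopt : H η + lam • η + g = 0)
    (hpsd : ∀ v : EuclideanSpace ℝ (Fin d), 0 ≤ (inner ℝ v (H v + lam • v) : ℝ)) :
    (inner ℝ g η : ℝ) + 1 / 2 * (inner ℝ η (H η) : ℝ) + LH / 6 * ‖η‖ ^ 3
      ≤ -(α / 12) * ‖η‖ ^ 3 := by
  have hg : g = -(H η + lam • η) := eq_neg_of_add_eq_zero_right hopt
  have hA : 0 ≤ (inner ℝ η (H η) : ℝ) + lam * ‖η‖ ^ 2 := by
    have := hpsd η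
    rwa [inner_add_right, inner_smul_right, real_inner_self_eq_norm_sq] at this
  have hgη : (inner ℝ g η : ℝ) = -(inner ℝ η (H η) : ℝ) - lam * ‖η‖ ^ 2 := by
    rw [hg, inner_neg_left, inner_add_left, inner_smul_left, real_inner_self_eq_norm_sq,
      hsym η η]
    simp only [starRingEnd_apply, star_trivial]; ring
  have hn : (0:ℝ) ≤ ‖η‖ := norm_nonneg η
  rw [hgη]
  nlinarith [sq_nonneg ‖η‖, mul_nonneg hn (sq_nonneg ‖η‖)]
end
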